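/- Let E be a directed graph with edge set E¹ and maps n : E¹ → ℤ₊, m : E¹ → ℤ. Define p : (finite paths of E) → ℤ₊ recursively by: p(e) = 1 if m(e) = 0 and p(e) = n(e)/gcd(n(e), |m(e)|) otherwise, for edges e; and for a path μ = (e, ν) with e an edge and ν a path, p(μ) = 1 if m(e) = 0 and p(μ) = n(e)p(ν)/gcd(n(e)p(ν), |m(e)|) otherwise. Then for any composable paths μ ∈ E^k and ν ∈ E^l (k, l ≥ 1, with d(μ) = r(ν)), p(μ) divides p((μ,ν)). -/

import Mathlib

/-- The contraction number `p(μ)` of a path `μ` (encoded as a list of edges, first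
edge = range side), defined recursively: `p(e) = 1` if `m(e) = 0` and
`p(e) = n(e)/gcd(n(e), |m(e)|)` otherwise; for `μ = (e, ν)`, `p(μ) = 1` if `m(e) = 0`
and `p(μ) = n(e)p(ν)/gcd(n(e)p(ν), |m(e)|)` otherwise. (The empty path has `p = 1`.) -/
def contractionNum {E : Type*} (n : E → ℕ) (m : E → ℤ) : List E → ℕ
  | [] => 1
  | e :: ν =>
    if m e = 0 then 1
    else (n e * contractionNum n m ν) / Nat.gcd (n e * contractionNum n m ν) (m e).natAbs

lemma key {a b c : ℕ} (hab : a ∣ b) (hb : b ≠ 0) :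
    a / Nat.gcd a c ∣ b / Nat.gcd b c := by
  obtain ⟨k, rfl⟩ := hab
  rw [Nat.dvd_div_iff_mul_dvd (Nat.gcd_dvd_left _ _)]
  have h1 : Nat.gcd (a * k) c ∣ Nat.gcd a c * k := by
    rw [Nat.gcd_comm (a * k) c]
    exact (show Nat.gcd c (a * k) ∣ Nat.gcd c a * Nat.gcd c k from gcd_mul_dvd_mul_gcd c a k).trans
      (mul_dvd_mul (by rw [Nat.gcd_comm]) (Nat.gcd_dvd_right _ _))
  calc Nat.gcd (a * k) c * (a / Nat.gcd a c)
      ∣ (Nat.gcd a c * k) * (a / Nat.gcd a c) := mul_dvd_mul_right h1 _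
    _ = a * k := by
        rw [mul_comm (Nat.gcd a c) k, mul_assoc, Nat.mul_div_cancel' (Nat.gcd_dvd_left _ _),
          mul_comm]

lemma contractionNum_pos {E : Type*} (n : E → ℕ) (m : E → ℤ) (hn : ∀ e, 0 < n e) :
    ∀ μ : List E, 0 < contractionNum n m μ := by
  intro μ
  induction μ with
  | nil => simp [contractionNum]
  | cons e ν ih =>
    simp only [contractionNum]
    split
    · exact one_pos
    · exact Nat.div_pos (Nat.le_of_dvd (Nat.mul_pos (hn e) ih) (Nat.gcd_dvd_left _ _))
        (Nat.gcd_pos_of_pos_left _ (Nat.mul_pos (hn e) ih))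

theorem stmt5 {V E : Type*} (dom ran : E → V) (n : E → ℕ) (m : E → ℤ)
    (hn : ∀ e, 0 < n e)
    (μ ν : List E) (hμ : μ ≠ []) (hν : ν ≠ [])
    (hchain : (μ ++ ν).Chain' (fun e f => dom e = ran f)) :
    contractionNum n m μ ∣ contractionNum n m (μ ++ ν) := by
  clear hμ hν hchain
  induction μ with
  | nil => exact one_dvd _
  | cons e μ' ih =>
    simp only [List.cons_append, contractionNum]
    split
    · exact dvd_refl 1
    · exact key (mul_dvd_mul_left _ ih)
        (Nat.mul_pos (hn e) (contractionNum_pos n m hn (μ' ++ ν))).ne'
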